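/- Let E be real. If u ∈ ℂ^{2m} is nonzero, z ∈ ℂ is nonzero, and T(E)·u = z·u, then 1/z̄ (the inverse of the complex conjugate of z) is also an eigenvalue of T(E); moreover, if in addition |z| ≠ 1, then u†·Σ_n·u = 0. -/

import Mathlib

open Matrix

noncomputable def tstep {m : ℕ} (A B C : Matrix (Fin m) (Fin m) ℂ) (E : ℂ) :
    Matrix (Fin m ⊕ Fin m) (Fin m ⊕ Fin m) ℂ :=
  Matrix.fromBlocks (B⁻¹ * (E • 1 - A)) (-(B⁻¹ * C)) 1 0

/-- The transfer matrix `T(E) = t_n(E) ⋯ t_1(E)` (0-indexed: `t_{n-1} ⋯ t_0`). -/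
noncomputable def transfer {n m : ℕ} (A B C : Fin n → Matrix (Fin m) (Fin m) ℂ) (E : ℂ) :
    Matrix (Fin m ⊕ Fin m) (Fin m ⊕ Fin m) ℂ :=
  ((List.ofFn fun k : Fin n => tstep (A k) (B k) (C k) E).reverse).prod

/-- For the Hermitian chain: `C_k = B_{k-1}ᴴ` for `k = 2,…,n` and `C_1 = B_nᴴ`
(indices cyclically shifted, `0`-indexed). -/
noncomputable def hermC {n m : ℕ} (hn : 0 < n) (B : Fin n → Matrix (Fin m) (Fin m) ℂ) :
    Fin n → Matrix (Fin m) (Fin m) ℂ :=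
  fun k => (B ⟨((k : ℕ) + (n - 1)) % n, Nat.mod_lt _ hn⟩)ᴴ

/-- The symplectic form `Σ_n = i·[[0, -B_nᴴ],[B_n, 0]]`. -/
noncomputable def SigmaN {n m : ℕ} (hn : 0 < n) (B : Fin n → Matrix (Fin m) (Fin m) ℂ) :
    Matrix (Fin m ⊕ Fin m) (Fin m ⊕ Fin m) ℂ :=
  Complex.I • Matrix.fromBlocks 0 (-(B ⟨n - 1, by omega⟩)ᴴ) (B ⟨n - 1, by omega⟩) 0

/-! ### Auxiliary material -/

/-- The symplectic form associated to a single matrix. -/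
noncomputable def Sform {m : ℕ} (M : Matrix (Fin m) (Fin m) ℂ) :
    Matrix (Fin m ⊕ Fin m) (Fin m ⊕ Fin m) ℂ :=
  Complex.I • Matrix.fromBlocks 0 (-Mᴴ) M 0

lemma step_conj {m : ℕ} (A B C : Matrix (Fin m) (Fin m) ℂ) (E : ℂ)
    (hE : star E = E) (hA : A.IsHermitian) (hB : IsUnit B) :
    (tstep A B C E)ᴴ * Sform B * tstep A B C E = Sform Cᴴ := by
  have hBd : IsUnit B.det := (Matrix.isUnit_iff_isUnit_det B).mp hB
  have hBHd : IsUnit (Bᴴ).det := by rw [Matrix.det_conjTranspose]; exact hBd.star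
  unfold tstep Sform
  rw [Matrix.mul_smul, Matrix.smul_mul]
  congr 1
  rw [fromBlocks_conjTranspose, fromBlocks_multiply, fromBlocks_multiply]
  have h1 : (E • (1 : Matrix (Fin m) (Fin m) ℂ) - A)ᴴ = E • 1 - A := by
    rw [conjTranspose_sub, conjTranspose_smul, hA.eq, conjTranspose_one, hE]
  simp only [conjTranspose_neg, conjTranspose_mul, Matrix.conjTranspose_nonsing_inv, h1,
    conjTranspose_one, conjTranspose_zero, Matrix.mul_zero, Matrix.zero_mul, Matrix.mul_one,
    Matrix.one_mul, Matrix.mul_neg, Matrix.neg_mul, neg_neg, add_zero, zero_add,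
    Matrix.mul_nonsing_inv_cancel_left _ _ hBd, Matrix.nonsing_inv_mul_cancel_right _ _ hBHd,
    Matrix.mul_assoc, conjTranspose_conjTranspose]
  abel

lemma prod_inv_key {α : Type*} [Fintype α] [DecidableEq α] {N : ℕ}
    (f g : ℕ → Matrix α α ℂ)
    (h : ∀ j < N, (f j)ᴴ * g (j + 1) * f j = g j) :
    ∀ j ≤ N, (((List.range j).map f).reverse.prod)ᴴ * g j *
      ((List.range j).map f).reverse.prod = g 0 := by
  intro j
  induction j with
  | zero => simp
  | succ j ih =>
    intro hj
    have hji : j ≤ N := by omega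
    rw [List.range_succ, List.map_append, List.reverse_append]
    simp only [List.map_cons, List.map_nil, List.reverse_cons, List.reverse_nil,
      List.nil_append, List.singleton_append, List.prod_cons]
    set P := ((List.range j).map f).reverse.prod with hP
    rw [conjTranspose_mul]
    calc Pᴴ * (f j)ᴴ * g (j + 1) * (f j * P)
        = Pᴴ * ((f j)ᴴ * g (j + 1) * f j) * P := by
          simp only [Matrix.mul_assoc]
      _ = Pᴴ * g j * P := by rw [h j (by omega)]
      _ = g 0 := ih hji

/-- For real `E`, eigenvalues of `T(E)` come in pairs `z`, `1/z̄`; moreover if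
`|z| ≠ 1` then the eigenvector is isotropic for `Σ_n`. -/
theorem stmt17 {n m : ℕ} (hn : 2 ≤ n) (hm : 1 ≤ m)
    (A B : Fin n → Matrix (Fin m) (Fin m) ℂ)
    (hA : ∀ k, (A k).IsHermitian) (hB : ∀ k, IsUnit (B k)) (E : ℝ)
    (u : Fin m ⊕ Fin m → ℂ) (hu : u ≠ 0) (z : ℂ) (hz : z ≠ 0)
    (huz : transfer A B (hermC (by omega) B) (E : ℂ) *ᵥ u = z • u) :
    (transfer A B (hermC (by omega : 0 < n) B) (E : ℂ) -
        ((starRingEnd ℂ z)⁻¹) • 1).det = 0 ∧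
    (‖z‖ ≠ 1 →
      dotProduct (star u) (SigmaN (by omega : 0 < n) B *ᵥ u) = 0) := by
  have hn0 : 0 < n := by omega
  set T := transfer A B (hermC hn0 B) (E : ℂ) with hT
  -- nat-indexed step matrices and forms
  set f : ℕ → Matrix (Fin m ⊕ Fin m) (Fin m ⊕ Fin m) ℂ :=
    fun j => if h : j < n then tstep (A ⟨j, h⟩) (B ⟨j, h⟩) (hermC hn0 B ⟨j, h⟩) (E : ℂ)
      else 1 with hf
  set g : ℕ → Matrix (Fin m ⊕ Fin m) (Fin m ⊕ Fin m) ℂ :=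
    fun j => Sform (B ⟨(j + (n - 1)) % n, Nat.mod_lt _ hn0⟩) with hg
  -- T as range-product
  have hTf : T = ((List.range n).map f).reverse.prod := by
    rw [hT]
    unfold transfer
    congr 1
    rw [List.ofFn_eq_map, ← (show (List.finRange n).map Fin.val = List.range n from
      List.ext_getElem (by simp) (by simp)), List.map_map]
    congr 1
    apply List.map_congr_left
    intro k _
    simp only [Function.comp_apply, hf, dif_pos k.isLt]
  -- the step relation
  have hstep : ∀ j < n, (f j)ᴴ * g (j + 1) * f j = g j := by
    intro j hj
    have h1 : (j + 1 + (n - 1)) % n = j := by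
      have : j + 1 + (n - 1) = j + n := by omega
      rw [this, Nat.add_mod_right, Nat.mod_eq_of_lt hj]
    have hfj : f j = tstep (A ⟨j, hj⟩) (B ⟨j, hj⟩) (hermC hn0 B ⟨j, hj⟩) (E : ℂ) := by
      simp only [hf, dif_pos hj]
    have h1' : (⟨(j + 1 + (n - 1)) % n, Nat.mod_lt _ hn0⟩ : Fin n) = ⟨j, hj⟩ := by
      exact Fin.ext h1
    have hgj1 : g (j + 1) = Sform (B ⟨j, hj⟩) := by
      simp only [hg, h1']
    rw [hfj, hgj1,
      step_conj _ _ _ _ (by simp [Complex.conj_ofReal]) (hA _) (hB _)]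
    simp only [hg, hermC, conjTranspose_conjTranspose]
  -- main symplectic invariance
  have hmain : Tᴴ * SigmaN hn0 B * T = SigmaN hn0 B := by
    have := prod_inv_key f g hstep n le_rfl
    rw [← hTf] at this
    have hgn : g n = SigmaN hn0 B := by
      have h6 : (⟨(n + (n - 1)) % n, Nat.mod_lt _ hn0⟩ : Fin n) = ⟨n - 1, by omega⟩ := by
        have h7 : (n + (n - 1)) % n = n - 1 := by
          have h5 : n + (n - 1) = (n - 1) + n := by omega
          rw [h5, Nat.add_mod_right, Nat.mod_eq_of_lt (by omega)]
        exact Fin.ext h7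
      simp only [hg, h6]
      rfl
    have hg0 : g 0 = SigmaN hn0 B := by
      have h6 : (⟨(0 + (n - 1)) % n, Nat.mod_lt _ hn0⟩ : Fin n) = ⟨n - 1, by omega⟩ := by
        have h7 : (0 + (n - 1)) % n = n - 1 := by
          rw [Nat.zero_add, Nat.mod_eq_of_lt (by omega)]
        exact Fin.ext h7
      simp only [hg, h6]
      rfl
    rw [hgn, hg0] at this
    exact this
  set Bn := B ⟨n - 1, by omega⟩ with hBn
  have hBnd : IsUnit Bn.det := (Matrix.isUnit_iff_isUnit_det Bn).mp (hB _)
  have hBnHd : IsUnit (Bnᴴ).det := by rw [Matrix.det_conjTranspose]; exact hBnd.star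
  have hSig : SigmaN hn0 B = Complex.I • Matrix.fromBlocks 0 (-Bnᴴ) Bn 0 := rfl
  -- left inverse of Sigma
  set X : Matrix (Fin m ⊕ Fin m) (Fin m ⊕ Fin m) ℂ :=
    (-Complex.I) • Matrix.fromBlocks 0 Bn⁻¹ (-(Bnᴴ)⁻¹) 0 with hX
  have hXS : X * SigmaN hn0 B = 1 := by
    rw [hX, hSig, Matrix.smul_mul, Matrix.mul_smul, smul_smul]
    rw [fromBlocks_multiply]
    simp only [Matrix.mul_zero, Matrix.zero_mul, Matrix.mul_neg, Matrix.neg_mul, neg_neg,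
      add_zero, zero_add, neg_zero, Matrix.nonsing_inv_mul _ hBnd, Matrix.nonsing_inv_mul _ hBnHd]
    rw [show -Complex.I * Complex.I = 1 by simp [Complex.I_mul_I], one_smul,
      ← Matrix.fromBlocks_one]
  -- Sigma u ≠ 0
  have hSu : SigmaN hn0 B *ᵥ u ≠ 0 := by
    intro h0
    apply hu
    have : X *ᵥ (SigmaN hn0 B *ᵥ u) = u := by
      rw [Matrix.mulVec_mulVec, hXS, Matrix.one_mulVec]
    rw [h0, Matrix.mulVec_zero] at this
    exact this.symm
  -- eigen relation for Tᴴ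
  have heig : Tᴴ *ᵥ (SigmaN hn0 B *ᵥ u) = z⁻¹ • (SigmaN hn0 B *ᵥ u) := by
    have h1 : (Tᴴ * SigmaN hn0 B * T) *ᵥ u = SigmaN hn0 B *ᵥ u := by rw [hmain]
    rw [Matrix.mul_assoc, ← Matrix.mulVec_mulVec, ← Matrix.mulVec_mulVec] at h1
    rw [huz, Matrix.mulVec_smul, Matrix.mulVec_smul] at h1
    calc Tᴴ *ᵥ (SigmaN hn0 B *ᵥ u)
        = z⁻¹ • (z • (Tᴴ *ᵥ (SigmaN hn0 B *ᵥ u))) := by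
          rw [smul_smul, inv_mul_cancel₀ hz, one_smul]
      _ = z⁻¹ • (SigmaN hn0 B *ᵥ u) := by rw [h1]
  constructor
  · -- determinant claim
    have hker : (Tᴴ - z⁻¹ • 1) *ᵥ (SigmaN hn0 B *ᵥ u) = 0 := by
      rw [Matrix.sub_mulVec, Matrix.smul_mulVec, Matrix.one_mulVec, heig, sub_self]
    have hdet : (Tᴴ - z⁻¹ • 1).det = 0 := by
      rw [← Matrix.exists_mulVec_eq_zero_iff]
      exact ⟨SigmaN hn0 B *ᵥ u, hSu, hker⟩
    have hct : (Tᴴ - z⁻¹ • 1)ᴴ = T - ((starRingEnd ℂ z)⁻¹) • 1 := by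
      rw [conjTranspose_sub, conjTranspose_conjTranspose, conjTranspose_smul,
        conjTranspose_one, star_inv₀]
      rfl
    calc (T - ((starRingEnd ℂ z)⁻¹) • 1).det
        = ((Tᴴ - z⁻¹ • 1)ᴴ).det := by rw [hct]
      _ = star (Tᴴ - z⁻¹ • 1).det := Matrix.det_conjTranspose _
      _ = 0 := by rw [hdet, star_zero]
  · -- isotropy claim
    intro habs
    set s := dotProduct (star u) (SigmaN hn0 B *ᵥ u) with hs
    have key : z * ((starRingEnd ℂ) z * s) = s := by
      have h1 : star u ⬝ᵥ ((Tᴴ * SigmaN hn0 B * T) *ᵥ u) = s := by rw [hmain]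
      rw [Matrix.mul_assoc, ← Matrix.mulVec_mulVec, ← Matrix.mulVec_mulVec] at h1
      rw [Matrix.dotProduct_mulVec, ← Matrix.star_mulVec, huz] at h1
      rw [Matrix.mulVec_smul, star_smul, dotProduct_smul, smul_dotProduct] at h1
      rw [smul_smul] at h1
      simpa [hs, mul_assoc] using h1
    have hz1 : (starRingEnd ℂ z) * z ≠ 1 := by
      intro hcon
      apply habs
      have h2 : ((Complex.normSq z : ℝ) : ℂ) = 1 := by
        rw [← Complex.mul_conj]
        linear_combination hcon
      have h3 : Complex.normSq z = 1 := by exact_mod_cast h2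
      have h4 : ‖z‖ ^ 2 = 1 := by rw [Complex.sq_norm, h3]
      nlinarith [norm_nonneg z, h4]
    have : ((starRingEnd ℂ z) * z - 1) * s = 0 := by linear_combination key
    rcases mul_eq_zero.mp this with h | h
    · exact absurd (by linear_combination h) hz1
    · exact h
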